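/- Let r1, r2 > 0 with r1 < 1 and r1 + 1 ≤ r2, and let M = ((0,-r1),(1,-r2)). Then M has a real eigenvalue λ with |λ| < 1, and there is a corresponding eigenvector direction along which the affine map g(v) = Mv + (r1, r2) is a contraction toward its fixed point p* = (r1/(r1+r2+1), (r1+r2)/(r1+r2+1)); consequently there exist infinitely many points v ≠ p* with gᵏ(v) → p* as k → ∞. -/
import Mathlib


open Filter Polynomial

/-- For `0 < r1 < 1` and `r1 + 1 ≤ r2`, the matrix `M = ((0,-r1),(1,-r2))` has
a real eigenvalue `λ` with `|λ| < 1`, along whose eigendirection the affine map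
`g(v) = Mv + (r1,r2)` contracts toward its fixed point `p* = (r1/(r1+r2+1), (r1+r2)/(r1+r2+1))`;
consequently there are infinitely many points `v ≠ p*` with `gᵏ(v) → p*`. -/
theorem region2_stable_direction (r1 r2 : ℝ) (hr1pos : 0 < r1) (hr1 : r1 < 1)
    (hr2 : r1 + 1 ≤ r2)
    (g : ℝ × ℝ → ℝ × ℝ)
    (hg : ∀ p : ℝ × ℝ, g p = (-r1 * p.2 + r1, p.1 - r2 * p.2 + r2))
    (pstar : ℝ × ℝ) (hpstar : pstar = (r1 / (r1 + r2 + 1), (r1 + r2) / (r1 + r2 + 1))) :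
    ∃ lam : ℝ, |lam| < 1 ∧
      (!![(0 : ℝ), -r1; 1, -r2]).charpoly.IsRoot lam ∧
      ∃ u : ℝ × ℝ, u ≠ 0 ∧
        (∀ c : ℝ, g (pstar + c • u) = pstar + (c * lam) • u) ∧
        {w : ℝ × ℝ | w ≠ pstar ∧
          Tendsto (fun k : ℕ => g^[k] w) atTop (nhds pstar)}.Infinite := by
  have hr2pos : 0 < r2 := by linarith
  set D : ℝ := r2 ^ 2 - 4 * r1 with hD
  have hDpos : 0 < D := by nlinarith
  set s : ℝ := Real.sqrt D with hs
  have hs0 : 0 ≤ s := Real.sqrt_nonneg D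
  have hssq : s ^ 2 = D := Real.sq_sqrt hDpos.le
  set lam : ℝ := (-r2 + s) / 2 with hlam
  have hroot : lam ^ 2 + r2 * lam + r1 = 0 := by
    rw [hlam]; nlinarith [hssq]
  have hslt : s < r2 := by
    rw [hs]
    rw [show r2 = Real.sqrt (r2 ^ 2) by rw [Real.sqrt_sq hr2pos.le]]
    exact Real.sqrt_lt_sqrt (by nlinarith) (by nlinarith)
  have hsgt : r2 - 2 < s := by nlinarith
  have habs : |lam| < 1 := by
    rw [abs_lt]; constructor <;> [skip; skip] <;> rw [hlam] <;> nlinarith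
  have hden : r1 + r2 + 1 ≠ 0 := by positivity
  refine ⟨lam, habs, ?_, (lam + r2, 1), ?_, ?_, ?_⟩
  · -- charpoly root
    have hcp : (!![(0 : ℝ), -r1; 1, -r2]).charpoly = X ^ 2 + C r2 * X + C r1 := by
      rw [Matrix.charpoly, Matrix.det_fin_two]
      simp [Matrix.charmatrix_apply, Matrix.one_apply]
      ring
    rw [hcp]
    simpa using hroot
  · -- u ≠ 0
    simp [Prod.ext_iff]
  · -- eigendirection
    intro c
    rw [hg, hpstar]
    simp only [Prod.smul_mk, smul_eq_mul, Prod.mk_add_mk, Prod.ext_iff]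
    constructor
    · field_simp
      rw [hlam]
      linear_combination (-(c * (r1 + r2 + 1)) / 4) * (hssq.trans hD)
    · field_simp
      ring
  · -- infinitely many converging points
    have key : ∀ c : ℝ, g (pstar + c • ((lam + r2, 1) : ℝ × ℝ)) = pstar + (c * lam) • ((lam + r2, 1) : ℝ × ℝ) := by
      intro c
      rw [hg, hpstar]
      simp only [Prod.smul_mk, smul_eq_mul, Prod.mk_add_mk, Prod.ext_iff]
      constructor
      · field_simp
        rw [hlam]
        linear_combination (-(c * (r1 + r2 + 1)) / 4) * (hssq.trans hD)
      · field_simp; ring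
    have hiter : ∀ (c : ℝ) (k : ℕ),
        g^[k] (pstar + c • ((lam + r2, 1) : ℝ × ℝ)) = pstar + (c * lam ^ k) • ((lam + r2, 1) : ℝ × ℝ) := by
      intro c k
      induction k generalizing c with
      | zero => simp
      | succ n ih =>
        rw [Function.iterate_succ_apply, key c, ih (c * lam)]
        ring_nf
    have hmem : ∀ c : ℝ, c ≠ 0 →
        (pstar + c • ((lam + r2, 1) : ℝ × ℝ)) ∈
          {w : ℝ × ℝ | w ≠ pstar ∧ Tendsto (fun k : ℕ => g^[k] w) atTop (nhds pstar)} := by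
      intro c hc
      constructor
      · intro h
        have : c • ((lam + r2, 1) : ℝ × ℝ) = 0 := by
          have := congrArg (fun w => w - pstar) h
          simpa using this
        have h2 := congrArg Prod.snd this
        simp at h2
        exact hc h2
      · simp only [hiter]
        have hl : Tendsto (fun k : ℕ => c * lam ^ k) atTop (nhds 0) := by
          simpa using (tendsto_pow_atTop_nhds_zero_of_abs_lt_one habs).const_mul c
        have : Tendsto (fun k : ℕ => pstar + (c * lam ^ k) • ((lam + r2, 1) : ℝ × ℝ)) atTop
            (nhds (pstar + (0 : ℝ) • ((lam + r2, 1) : ℝ × ℝ))) :=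
          tendsto_const_nhds.add (hl.smul_const _)
        simpa using this
    have hinj : Function.Injective (fun c : ℝ => pstar + c • ((lam + r2, 1) : ℝ × ℝ)) := by
      intro a b hab
      have := congrArg Prod.snd hab
      simpa using this
    have hsub : (fun c : ℝ => pstar + c • ((lam + r2, 1) : ℝ × ℝ)) '' {c : ℝ | c ≠ 0} ⊆
        {w : ℝ × ℝ | w ≠ pstar ∧ Tendsto (fun k : ℕ => g^[k] w) atTop (nhds pstar)} := by
      rintro w ⟨c, hc, rfl⟩
      exact hmem c hc
    exact Set.Infinite.mono hsub
      ((Set.infinite_of_not_bddAbove (by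
        intro h
        obtain ⟨B, hB⟩ := h
        have := hB (show max B 1 + 1 ∈ {c : ℝ | c ≠ 0} by
          simp only [Set.mem_setOf_eq]
          nlinarith [le_max_right B (1:ℝ)])
        nlinarith [le_max_left B (1:ℝ)])).image hinj.injOn)
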